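/- Let R be an associative ring with identity and g(x) a polynomial with all coefficients in the center C(R) of R. Regard g(x) as a polynomial over the formal power series ring R[[t]] by sending each coefficient a to the constant power series a (which is central in R[[t]]). If R[[t]] is strongly g(x)-clean, then R is strongly g(x)-clean. -/

import Mathlib

/-- If the formal power series ring `R[[t]]` is strongly `g(x)`-clean, where
`g` has central coefficients and is regarded over `R[[t]]` via constant power
series, then `R` is strongly `g(x)`-clean. -/
theorem strongly_gx_clean_of_powerSeries (R : Type*) [Ring R]
    (g : Polynomial R) (hg : ∀ i, g.coeff i ∈ Set.center R)
    (hP : ∀ f : PowerSeries R, ∃ s u : PowerSeries R,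
      (g.map (PowerSeries.C (R := R))).eval s = 0 ∧ IsUnit u ∧ f = s + u ∧ s * u = u * s) :
    ∀ r : R, ∃ s u : R, g.eval s = 0 ∧ IsUnit u ∧ r = s + u ∧ s * u = u * s := by
  intro r
  obtain ⟨s, u, h1, h2, h3, h4⟩ := hP (PowerSeries.C (R := R) r)
  let φ : PowerSeries R →+* R := PowerSeries.constantCoeff (R := R)
  refine ⟨φ s, φ u, ?_, h2.map φ, ?_, ?_⟩
  · have := congrArg φ h1
    rw [Polynomial.eval_map, Polynomial.hom_eval₂, map_zero] at this
    have hc : φ.comp (PowerSeries.C (R := R)) = RingHom.id R := by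
      ext x; simp [φ]
    rw [hc] at this; rw [Polynomial.eval]
    exact this
  · have := congrArg φ h3
    simpa [φ] using this
  · have := congrArg φ h4
    simpa [φ] using this
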